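/- Let (X, μ) be a finite measure space, let f : X → ℝ be measurable with |f| ≤ M μ-almost everywhere for some constant M > 0, and let s₀ > 0 be such that ∫ |f|^{s₀} dμ > 0. Then the function s ↦ log ∫ |f|^s dμ is differentiable at s₀, with derivative equal to (∫ |f|^{s₀} log|f| dμ) / (∫ |f|^{s₀} dμ), where the integrand |f|^{s₀} log|f| is interpreted as 0 at points where f = 0. -/

import Mathlib

open MeasureTheory Real

/-- On a finite measure space, if `|f| ≤ M` a.e. (`M > 0`) and `∫ |f|^{s₀} dμ > 0` for
some `s₀ > 0`, then `s ↦ log ∫ |f|^s dμ` is differentiable at `s₀` with derivative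
`(∫ |f|^{s₀} log |f| dμ) / (∫ |f|^{s₀} dμ)`. -/
theorem stmt_18 {X : Type*} [MeasurableSpace X] (μ : Measure X) [IsFiniteMeasure μ]
    (f : X → ℝ) (hf : Measurable f) (M : ℝ) (hM : 0 < M)
    (hbdd : ∀ᵐ x ∂μ, |f x| ≤ M)
    (s₀ : ℝ) (hs₀ : 0 < s₀) (hpos : 0 < ∫ x, |f x| ^ s₀ ∂μ) :
    HasDerivAt (fun s : ℝ => Real.log (∫ x, |f x| ^ s ∂μ))
      ((∫ x, |f x| ^ s₀ * Real.log |f x| ∂μ) / (∫ x, |f x| ^ s₀ ∂μ)) s₀ := by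
  set C : ℝ := 2 / s₀ + (max M 1) ^ (2 * s₀) * |Real.log M| with hC
  have hCnn : 0 ≤ C := by
    have h1 : (0:ℝ) ≤ 2 / s₀ := by positivity
    have h2 : (0:ℝ) ≤ (max M 1) ^ (2 * s₀) * |Real.log M| := by positivity
    rw [hC]; linarith
  -- the main pointwise bound on the derivative
  have key : ∀ a : ℝ, 0 ≤ a → a ≤ M → ∀ s ∈ Metric.ball s₀ (s₀ / 2),
      |a ^ s * Real.log a| ≤ C := by
    intro a ha haM s hs
    rw [Metric.mem_ball, Real.dist_eq, abs_lt] at hs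
    have hs1 : s₀ / 2 < s := by linarith
    have hs2 : s < 2 * s₀ := by linarith
    have hspos : 0 < s := lt_trans (by linarith) hs1
    rcases eq_or_lt_of_le ha with h0 | hapos
    · rw [← h0, Real.zero_rpow hspos.ne', zero_mul, abs_zero]; exact hCnn
    rcases le_or_gt a 1 with h1 | h1
    · -- small case
      have hle : a ^ s ≤ a ^ (s₀ / 2) :=
        Real.rpow_le_rpow_of_exponent_ge hapos h1 hs1.le
      have hb := Real.abs_log_mul_self_rpow_lt a (s₀ / 2) hapos h1 (by linarith)
      have : |a ^ s * Real.log a| ≤ |Real.log a * a ^ (s₀ / 2)| := by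
        rw [abs_mul, abs_mul, mul_comm]
        apply mul_le_mul_of_nonneg_left _ (abs_nonneg _)
        rw [abs_of_pos (Real.rpow_pos_of_pos hapos s),
          abs_of_pos (Real.rpow_pos_of_pos hapos (s₀ / 2))]
        exact hle
      have h2s : (1 : ℝ) / (s₀ / 2) = 2 / s₀ := by field_simp
      have : |a ^ s * Real.log a| ≤ 2 / s₀ := by
        rw [← h2s]; exact this.trans hb.le
      have h2 : (0:ℝ) ≤ (max M 1) ^ (2 * s₀) * |Real.log M| := by positivity
      rw [hC]; linarith
    · -- large case : 1 < a ≤ M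
      have hM1 : 1 ≤ M := le_trans h1.le haM
      have hpow : a ^ s ≤ (max M 1) ^ (2 * s₀) := by
        calc a ^ s ≤ a ^ (2 * s₀) :=
              Real.rpow_le_rpow_of_exponent_le h1.le hs2.le
          _ ≤ (max M 1) ^ (2 * s₀) :=
              Real.rpow_le_rpow (by linarith) (le_trans haM (le_max_left _ _)) (by linarith)
      have hlog : |Real.log a| ≤ |Real.log M| := by
        rw [abs_of_nonneg (Real.log_nonneg h1.le), abs_of_nonneg (Real.log_nonneg hM1)]
        exact Real.log_le_log (by linarith) haM
      have : |a ^ s * Real.log a| ≤ (max M 1) ^ (2 * s₀) * |Real.log M| := by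
        rw [abs_mul, abs_of_pos (Real.rpow_pos_of_pos (by linarith) s)]
        exact mul_le_mul hpow hlog (abs_nonneg _) (by positivity)
      have h1' : (0:ℝ) ≤ 2 / s₀ := by positivity
      rw [hC]; linarith
  -- integrability of F s₀
  have hFmeas : ∀ s : ℝ, 0 ≤ s → AEStronglyMeasurable (fun x => |f x| ^ s) μ :=
    fun s hs => ((Real.continuous_rpow_const hs).measurable.comp hf.abs).aestronglyMeasurable
  have hFint : Integrable (fun x => |f x| ^ s₀) μ := by
    refine ⟨hFmeas s₀ hs₀.le, HasFiniteIntegral.of_bounded (C := (max M 1) ^ s₀) ?_⟩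
    filter_upwards [hbdd] with x hx
    rw [Real.norm_eq_abs, abs_of_nonneg (Real.rpow_nonneg (abs_nonneg _) _)]
    exact Real.rpow_le_rpow (abs_nonneg _) (hx.trans (le_max_left _ _)) hs₀.le
  -- bound integrable
  have hbound : Integrable (fun _ : X => C) μ := integrable_const C
  -- derivative of the integral
  have main := hasDerivAt_integral_of_dominated_loc_of_deriv_le
    (F := fun s x => |f x| ^ s) (F' := fun s x => |f x| ^ s * Real.log |f x|)
    (x₀ := s₀) (s := Metric.ball s₀ (s₀ / 2)) (bound := fun _ => C) (Metric.ball_mem_nhds _ (by linarith))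
    (by filter_upwards [lt_mem_nhds hs₀] with s hs using hFmeas s hs.le) hFint
    ((((Real.continuous_rpow_const hs₀.le).measurable.comp hf.abs).mul
      hf.abs.log).aestronglyMeasurable)
    ?_ hbound ?_
  · have hne : (∫ x, |f x| ^ s₀ ∂μ) ≠ 0 := ne_of_gt hpos
    exact main.2.log hne
  · filter_upwards [hbdd] with x hx s hs
    exact key |f x| (abs_nonneg _) hx s hs
  · filter_upwards [hbdd] with x hx s hs
    rw [Metric.mem_ball, Real.dist_eq, abs_lt] at hs
    have hspos : 0 < s := by linarith
    rcases eq_or_lt_of_le (abs_nonneg (f x)) with h0 | hapos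
    · have heq : (fun s' : ℝ => |f x| ^ s') =ᶠ[nhds s] fun _ => (0:ℝ) := by
        filter_upwards [lt_mem_nhds hspos] with s' hs'
        rw [← h0, Real.zero_rpow hs'.ne']
      have : |f x| ^ s * Real.log |f x| = 0 := by
        rw [← h0, Real.zero_rpow hspos.ne', zero_mul]
      rw [this]
      exact (hasDerivAt_const s (0:ℝ)).congr_of_eventuallyEq heq
    · exact (Real.hasStrictDerivAt_const_rpow hapos s).hasDerivAt
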